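/- For the planar reduced system y' = y(x - α), x' = x(ℓ/y - y) with x, y > 0 and constants α ∈ ℝ, ℓ > 0, the function G(t) = y(t) + x(t) + ℓ/y(t) - α·log(x(t)) is constant. -/

import Mathlib

theorem planar_reduced_system_conserved
    (α ℓ : ℝ) (hℓ : 0 < ℓ) (x y : ℝ → ℝ)
    (hxpos : ∀ t, 0 < x t) (hypos : ∀ t, 0 < y t)
    (hy : ∀ t, HasDerivAt y (y t * (x t - α)) t)
    (hx : ∀ t, HasDerivAt x (x t * (ℓ / y t - y t)) t)
    (G : ℝ → ℝ)
    (hG : ∀ t, G t = y t + x t + ℓ / y t - α * Real.log (x t)) :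
    ∀ s t : ℝ, G s = G t := by
  have key : ∀ t, HasDerivAt (fun t => y t + x t + ℓ / y t - α * Real.log (x t)) 0 t := by
    intro t
    have hy0 := (hypos t).ne'
    have hx0 := (hxpos t).ne'
    have h1 : HasDerivAt (fun t => ℓ / y t) (-(ℓ * (y t * (x t - α))) / (y t)^2) t := by
      exact ((hasDerivAt_const t ℓ).div (hy t) hy0).congr_deriv (by ring)
    have h2 : HasDerivAt (fun t => Real.log (x t)) ((x t)⁻¹ * (x t * (ℓ / y t - y t))) t :=
      HasDerivAt.comp t (Real.hasDerivAt_log hx0) (hx t)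
    have h : HasDerivAt (fun t => y t + x t + ℓ / y t - α * Real.log (x t)) _ t := (((hy t).add (hx t)).add h1).sub (h2.const_mul α)
    convert h using 1
    field_simp
    ring
  intro s t
  rw [hG s, hG t]
  have : ∀ a b : ℝ, (fun t => y t + x t + ℓ / y t - α * Real.log (x t)) a
      = (fun t => y t + x t + ℓ / y t - α * Real.log (x t)) b := by
    intro a b
    have := is_const_of_deriv_eq_zero (fun u => (key u).differentiableAt)
      (fun u => (key u).deriv) a b
    exact this
  exact this s t
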